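/- Let K be a compact Hausdorff space and let x ∈ K. The maximal ideal M_x = {f ∈ C(K) : f(x) = 0} of the vector lattice C(K) of continuous real-valued functions on K is a principal ideal if and only if x is an isolated point of K. -/
import Mathlib


/-- An (order) ideal of the vector lattice `E`: a solid linear subspace. -/
def IsIdeal {E : Type*} [Lattice E] [AddCommGroup E] [Module ℝ E]
    (I : Submodule ℝ E) : Prop :=
  ∀ x y : E, |x| ≤ |y| → y ∈ I → x ∈ I

/-- A prime ideal: a proper ideal `P` such that `x ⊓ y ∈ P` implies `x ∈ P` or `y ∈ P`. -/
def IsPrimeIdeal {E : Type*} [Lattice E] [AddCommGroup E] [Module ℝ E]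
    (P : Submodule ℝ E) : Prop :=
  IsIdeal P ∧ P ≠ ⊤ ∧ ∀ x y : E, x ⊓ y ∈ P → x ∈ P ∨ y ∈ P

/-- A principal ideal: `I = {y : |y| ≤ c • x for some scalar c ≥ 0}` for some `x ≥ 0`. -/
def IsPrincipalIdeal {E : Type*} [Lattice E] [AddCommGroup E] [Module ℝ E]
    (I : Submodule ℝ E) : Prop :=
  ∃ x : E, 0 ≤ x ∧ ∀ y : E, y ∈ I ↔ ∃ c : ℝ, 0 ≤ c ∧ |y| ≤ c • x

/-- A maximal ideal: a proper ideal `M` such that any ideal between `M` and `E` equals `M` or `E`. -/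
def IsMaximalIdeal {E : Type*} [Lattice E] [AddCommGroup E] [Module ℝ E]
    (M : Submodule ℝ E) : Prop :=
  IsIdeal M ∧ M ≠ ⊤ ∧ ∀ J : Submodule ℝ E, IsIdeal J → M ≤ J → J = M ∨ J = ⊤

/-- An ideal `I` is order dense if its disjoint complement is trivial. -/
def IsOrderDense {E : Type*} [Lattice E] [AddCommGroup E] [Module ℝ E]
    (I : Submodule ℝ E) : Prop :=
  ∀ x : E, (∀ y ∈ I, |x| ⊓ |y| = 0) → x = 0

/-- `a` is an atom of the vector lattice `E`. -/
def IsAtomElem {E : Type*} [Lattice E] [AddCommGroup E] (a : E) : Prop :=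
  0 < a ∧ ∀ x y : E, 0 ≤ x → x ≤ a → 0 ≤ y → y ≤ a → x ⊓ y = 0 → x = 0 ∨ y = 0

/-- The vector lattice `E` is Archimedean. -/
def VLArchimedean (E : Type*) [Lattice E] [AddCommGroup E] : Prop :=
  ∀ x y : E, (∀ n : ℕ, n • x ≤ y) → x ≤ 0

/-- The vector lattice `E` is uniformly complete. -/
def UniformlyComplete (E : Type*) [Lattice E] [AddCommGroup E] [Module ℝ E] : Prop :=
  ∀ e : E, 0 ≤ e → ∀ x : ℕ → E,
    (∀ ε : ℝ, 0 < ε → ∃ N : ℕ, ∀ m n : ℕ, N ≤ m → N ≤ n → |x m - x n| ≤ ε • e) →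
    ∃ l : E, ∀ ε : ℝ, 0 < ε → ∃ N : ℕ, ∀ n : ℕ, N ≤ n → |x n - l| ≤ ε • e

/-- The vector lattice `E` has a strong unit. -/
def HasStrongUnit (E : Type*) [Lattice E] [AddCommGroup E] [Module ℝ E] : Prop :=
  ∃ e : E, 0 ≤ e ∧ ∀ x : E, ∃ c : ℝ, 0 < c ∧ |x| ≤ c • e

/-- The vector lattice `E` is prime Noetherian: every increasing sequence of
prime ideals is eventually constant. -/
def PrimeNoetherian (E : Type*) [Lattice E] [AddCommGroup E] [Module ℝ E] : Prop :=
  ∀ P : ℕ → Submodule ℝ E, (∀ n, IsPrimeIdeal (P n)) → Monotone P →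
    ∃ N : ℕ, ∀ n : ℕ, N ≤ n → P n = P N

theorem statement7 (K : Type*) [TopologicalSpace K] [CompactSpace K] [T2Space K]
    (x : K) :
    (∃ g : C(K, ℝ), 0 ≤ g ∧
        ∀ f : C(K, ℝ), f x = 0 ↔ ∃ c : ℝ, 0 ≤ c ∧ |f| ≤ c • g) ↔
      IsOpen ({x} : Set K) := by
  constructor
  · rintro ⟨g, hg, H⟩
    -- g x = 0
    have hgx : g x = 0 := by
      refine (H g).mpr ⟨1, zero_le_one, ?_⟩
      rw [one_smul, abs_of_nonneg hg]
    -- the square-root of g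
    set s : C(K, ℝ) := ⟨fun y => Real.sqrt (g y),
      Real.continuous_sqrt.comp g.continuous⟩ with hs_def
    have hsx : s x = 0 := by simp [hs_def, hgx]
    obtain ⟨c, hc0, hcs⟩ := (H s).mp hsx
    set c' : ℝ := c + 1 with hc'_def
    have hc' : 0 < c' := by positivity
    have key : ∀ y : K, Real.sqrt (g y) ≤ c' * g y := by
      intro y
      have h1 : |s| y ≤ (c • g) y := hcs y
      have h2 : |s y| = Real.sqrt (g y) := by
        simp [hs_def, abs_of_nonneg (Real.sqrt_nonneg _)]
      have h3 : (0:ℝ) ≤ g y := hg y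
      have := h1
      rw [ContinuousMap.abs_apply, h2] at this
      simp only [ContinuousMap.smul_apply, smul_eq_mul] at this
      nlinarith
    -- points where g is nonzero are bounded away from 0
    have lb : ∀ y : K, g y ≠ 0 → (c'⁻¹)^2 ≤ g y := by
      intro y hy
      have h3 : (0:ℝ) ≤ g y := hg y
      have hpos : 0 < g y := lt_of_le_of_ne h3 (Ne.symm hy)
      have hsq : Real.sqrt (g y) ^ 2 = g y := Real.sq_sqrt h3
      have hspos : 0 < Real.sqrt (g y) := Real.sqrt_pos.mpr hpos
      have hk := key y
      have h1c : 1 ≤ c' * Real.sqrt (g y) := by nlinarith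
      have : c'⁻¹ ≤ Real.sqrt (g y) := by
        rw [inv_le_iff_one_le_mul₀ hc']
        linarith [mul_comm c' (Real.sqrt (g y))]
      calc (c'⁻¹)^2 ≤ Real.sqrt (g y) ^ 2 := by
            apply pow_le_pow_left₀ (by positivity) this
        _ = g y := hsq
    -- the zero set of g is {x}
    have hZ : ({x} : Set K) = g ⁻¹' {0} := by
      ext y
      simp only [Set.mem_singleton_iff, Set.mem_preimage]
      constructor
      · rintro rfl; exact hgx
      · intro hy
        by_contra hne
        obtain ⟨f, hf0, hf1, -⟩ := exists_continuous_zero_one_of_isClosed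
          (isClosed_singleton (x := x)) (isClosed_singleton (x := y))
          (by simpa [Set.disjoint_singleton] using (Ne.symm hne))
        have hfx : f x = 0 := hf0 rfl
        obtain ⟨c₂, hc₂0, hc₂⟩ := (H f).mp hfx
        have this : |f| y ≤ (c₂ • g) y := hc₂ y
        rw [ContinuousMap.abs_apply] at this
        simp only [ContinuousMap.smul_apply, smul_eq_mul, hy, mul_zero] at this
        have : f y = 0 := abs_nonpos_iff.mp this
        rw [hf1 rfl] at this
        norm_num at this
    -- the zero set is open
    have hZopen : IsOpen (g ⁻¹' {0}) := by
      have : g ⁻¹' {0} = g ⁻¹' (Set.Iio ((c'⁻¹)^2)) := by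
        ext y
        simp only [Set.mem_preimage, Set.mem_singleton_iff, Set.mem_Iio]
        constructor
        · intro h; rw [h]; positivity
        · intro h
          by_contra hy
          exact absurd (lb y hy) (not_le.mpr h)
      rw [this]
      exact isOpen_Iio.preimage g.continuous
    rw [hZ]; exact hZopen
  · intro hx
    classical
    have hclosed : IsClosed ({x} : Set K) := isClosed_singleton
    have hclopen : IsClopen ({x} : Set K) := ⟨hclosed, hx⟩
    refine ⟨⟨({x} : Set K).piecewise 0 1, ?_⟩, ?_, ?_⟩
    · apply Continuous.piecewise
      · intro a ha
        rw [hclopen.frontier_eq] at ha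
        exact absurd ha (Set.notMem_empty a)
      · exact continuous_const
      · exact continuous_const
    · intro y
      simp only [ContinuousMap.coe_mk, ContinuousMap.zero_apply]
      by_cases hy : y ∈ ({x} : Set K) <;> simp [Set.piecewise, hy]
    · intro f
      constructor
      · intro hfx
        refine ⟨‖f‖, norm_nonneg f, ?_⟩
        rw [ContinuousMap.le_def]
        intro y
        show |f y| ≤ ‖f‖ * ({x} : Set K).piecewise (0 : K → ℝ) (1 : K → ℝ) y
        by_cases hy : y = x
        · subst hy
          rw [Set.piecewise_eq_of_mem _ _ _ (Set.mem_singleton y), hfx]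
          simp
        · rw [Set.piecewise_eq_of_notMem _ _ _ (by simpa using hy)]
          simpa using f.norm_coe_le_norm y
      · rintro ⟨c, hc0, hcf⟩
        have this : |f| x ≤ _ := hcf x
        rw [ContinuousMap.abs_apply] at this
        simp [Set.piecewise] at this
        exact this
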